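/- Let Σ be a k×k positive definite matrix, G a k₂×k matrix of full row rank, H₁ ∈ ℝ^{k×k₁} whose columns form a basis of ker(G) (k₁ = k − k₂), and M ∈ ℝ^{k₂×k₂} invertible. If C ∈ ℝ^{k×k} satisfies C H₁ = 0 and C Σ Gᵀ M = Σ Gᵀ M, then C = Σ Gᵀ (G Σ Gᵀ)⁻¹ G. -/

import Mathlib

open Matrix

private lemma mulVecLin_inj_of_rank {m n : ℕ} (A : Matrix (Fin m) (Fin n) ℝ)
    (h : A.rank = n) : Function.Injective A.mulVecLin := by
  rw [← LinearMap.ker_eq_bot]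
  have h1 := LinearMap.finrank_range_add_finrank_ker A.mulVecLin
  rw [show Module.finrank ℝ (LinearMap.range A.mulVecLin) = A.rank from rfl, h,
    Module.finrank_pi, Fintype.card_fin] at h1
  have : Module.finrank ℝ (LinearMap.ker A.mulVecLin) = 0 := by omega
  exact Submodule.finrank_eq_zero.mp this

theorem stmt_17 {k k₁ k₂ : ℕ} (hk : k = k₁ + k₂)
    (S : Matrix (Fin k) (Fin k) ℝ) (hS : S.PosDef)
    (G : Matrix (Fin k₂) (Fin k) ℝ) (hG : G.rank = k₂)
    (H₁ : Matrix (Fin k) (Fin k₁) ℝ) (hGH₁ : G * H₁ = 0) (hH₁ : H₁.rank = k₁)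
    (M : Matrix (Fin k₂) (Fin k₂) ℝ) (hM : IsUnit M)
    (C : Matrix (Fin k) (Fin k) ℝ)
    (hCH₁ : C * H₁ = 0) (hCS : C * (S * Gᵀ * M) = S * Gᵀ * M) :
    C = S * Gᵀ * (G * S * Gᵀ)⁻¹ * G := by
  -- Gᵀ has injective mulVecLin
  have hGt : (Gᵀ).rank = k₂ := by rw [rank_transpose, hG]
  have hGtinj : Function.Injective (Gᵀ).mulVecLin := mulVecLin_inj_of_rank _ hGt
  -- G * S * Gᵀ is positive definite, hence invertible
  have hGSG : (G * S * Gᵀ).PosDef := by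
    rw [posDef_iff_dotProduct_mulVec]
    constructor
    · have h1 : Sᵀ = S := hS.1
      show (G * S * Gᵀ)ᵀ = G * S * Gᵀ
      rw [transpose_mul, transpose_mul, transpose_transpose, h1, Matrix.mul_assoc]
    · intro x hx
      have hy : Gᵀ *ᵥ x ≠ 0 := by
        intro h
        apply hx
        apply hGtinj
        rw [map_zero]
        show Gᵀ *ᵥ x = 0
        exact h
      have key : star x ⬝ᵥ (G * S * Gᵀ) *ᵥ x
          = star (Gᵀ *ᵥ x) ⬝ᵥ S *ᵥ (Gᵀ *ᵥ x) := by
        simp only [star_trivial]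
        rw [Matrix.mul_assoc, ← mulVec_mulVec, dotProduct_mulVec, ← mulVec_transpose,
          ← mulVec_mulVec]
      rw [key]
      exact hS.dotProduct_mulVec_pos hy
  have hUdet : IsUnit (G * S * Gᵀ).det := (isUnit_iff_isUnit_det _).1 hGSG.isUnit
  have hinv : (G * S * Gᵀ)⁻¹ * (G * S * Gᵀ) = 1 := nonsing_inv_mul _ hUdet
  set P := S * Gᵀ * (G * S * Gᵀ)⁻¹ * G with hP
  -- C * (S * Gᵀ) = S * Gᵀ
  have hMdet : IsUnit M.det := (isUnit_iff_isUnit_det _).1 hM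
  have hCSG : C * (S * Gᵀ) = S * Gᵀ := by
    have h := congrArg (fun A => A * M⁻¹) hCS
    simpa [Matrix.mul_assoc, Matrix.mul_nonsing_inv _ hMdet, ← Matrix.mul_assoc,
      Matrix.mul_nonsing_inv_cancel_right _ _ hMdet] using h
  -- P * (S * Gᵀ) = S * Gᵀ
  have hPSG : P * (S * Gᵀ) = S * Gᵀ := by
    rw [hP]
    calc S * Gᵀ * (G * S * Gᵀ)⁻¹ * G * (S * Gᵀ)
        = S * Gᵀ * ((G * S * Gᵀ)⁻¹ * (G * S * Gᵀ)) := by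
          simp only [Matrix.mul_assoc]
      _ = S * Gᵀ := by rw [hinv, Matrix.mul_one]
  -- P * H₁ = 0
  have hPH₁ : P * H₁ = 0 := by
    rw [hP]
    calc S * Gᵀ * (G * S * Gᵀ)⁻¹ * G * H₁
        = S * Gᵀ * (G * S * Gᵀ)⁻¹ * (G * H₁) := by rw [Matrix.mul_assoc]
      _ = 0 := by rw [hGH₁, Matrix.mul_zero]
  set D := C - P with hD
  have hDH₁ : D * H₁ = 0 := by rw [hD, Matrix.sub_mul, hCH₁, hPH₁, sub_zero]
  have hDSG : D * (S * Gᵀ) = 0 := by rw [hD, Matrix.sub_mul, hCSG, hPSG, sub_self]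
  -- the two ranges span everything
  set R1 := LinearMap.range H₁.mulVecLin with hR1
  set R2 := LinearMap.range (S * Gᵀ).mulVecLin with hR2
  have hr1 : Module.finrank ℝ R1 = k₁ := hH₁
  have hr2 : Module.finrank ℝ R2 = k₂ := by
    have : (S * Gᵀ).rank = k₂ := by
      rw [rank_mul_eq_right_of_isUnit_det S Gᵀ ((isUnit_iff_isUnit_det _).1 hS.isUnit), hGt]
    exact this
  have hinf : R1 ⊓ R2 = ⊥ := by
    rw [Submodule.eq_bot_iff]
    rintro x ⟨⟨a, ha⟩, ⟨b, hb⟩⟩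
    simp only [mulVecLin_apply] at ha hb
    have hGx : G *ᵥ x = 0 := by
      rw [← ha]
      show G *ᵥ H₁ *ᵥ a = 0
      rw [mulVec_mulVec, hGH₁, zero_mulVec]
    have hGSGb : (G * S * Gᵀ) *ᵥ b = 0 := by
      have h2 : G *ᵥ (S * Gᵀ) *ᵥ b = 0 := by rw [hb]; exact hGx
      rw [mulVec_mulVec, ← Matrix.mul_assoc] at h2
      exact h2
    have hb0 : b = 0 := by
      have h3 := congrArg (fun v => (G * S * Gᵀ)⁻¹ *ᵥ v) hGSGb
      simpa [mulVec_mulVec, hinv] using h3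
    rw [← hb, hb0, mulVec_zero]
  have hsup : R1 ⊔ R2 = ⊤ := by
    apply Submodule.eq_top_of_finrank_eq
    have h := Submodule.finrank_sup_add_finrank_inf_eq R1 R2
    rw [hinf] at h
    simp only [finrank_bot, add_zero] at h
    rw [h, hr1, hr2, Module.finrank_pi, Fintype.card_fin]
    omega
  have hker : ∀ x, D *ᵥ x = 0 := by
    have hle : R1 ⊔ R2 ≤ LinearMap.ker D.mulVecLin := by
      apply sup_le
      · rintro x ⟨a, rfl⟩
        show D *ᵥ (H₁ *ᵥ a) = 0
        rw [mulVec_mulVec, hDH₁, zero_mulVec]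
      · rintro x ⟨b, rfl⟩
        show D *ᵥ ((S * Gᵀ) *ᵥ b) = 0
        rw [mulVec_mulVec, hDSG, zero_mulVec]
    intro x
    have hx : x ∈ LinearMap.ker D.mulVecLin := hle (hsup ▸ Submodule.mem_top)
    exact hx
  have hD0 : D = 0 := by
    ext i j
    have h4 := congrFun (hker (Pi.single j 1)) i
    simpa using h4
  have : C - P = 0 := hD0
  have := sub_eq_zero.mp this
  rw [this, hP]
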